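/- arXiv:1306.2452 — 4 statements merged into one kernel-verified Lean document; each statement's English description precedes it below -/
import Mathlib

section
/- Let $K : \mathbb{R}^d \to \mathbb{R}$ be a nonnegative integrable kernel with $\int K(v)\,dv = 1$ and $\int v K(v)\,dv = 0$, and let $p : \mathbb{R}^d \to \mathbb{R}$ be a twice continuously differentiable function whose second derivatives satisfy $|\partial^\beta p(x)| \le C_1 e^{-\gamma |x|^2}$ for all multi-indices $|\beta| = 2$. Suppose further $K(v) \le C e^{-\alpha |v|^{2+\beta_0}}$ for some $C, \alpha > 0$, $\beta_0 \ge 0$. Then for the smoothing error $r_\epsilon(x) := \int K(v)\, p(x + \epsilon v)\,dv - p(x)$, there are constants $\widetilde{C}, \gamma', \epsilon_0 > 0$ such that $|r_\epsilon(x)| \le \widetilde{C} \epsilon^2 e^{-\gamma' |x|^2}$ for all $0 < \epsilon < \epsilon_0$ and all $x \in \mathbb{R}^d$. -/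
open MeasureTheory Real

lemma gauss_integrable (d : ℕ) {b : ℝ} (hb : 0 < b) :
    Integrable (fun v : EuclideanSpace ℝ (Fin d) => Real.exp (-b * ‖v‖ ^ 2)) := by
  have h := GaussianFourier.integrable_cexp_neg_mul_sq_norm_add
    (V := EuclideanSpace ℝ (Fin d)) (b := (b : ℂ)) (by simpa using hb) 0 0
  have h2 := h.norm
  refine h2.congr (Filter.Eventually.of_forall fun v => ?_)
  have : (-(b : ℂ) * (‖v‖ : ℂ) ^ 2 + 0 * ((inner ℝ (0 : EuclideanSpace ℝ (Fin d)) v : ℝ) : ℂ))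
      = ((-b * ‖v‖ ^ 2 : ℝ) : ℂ) := by push_cast; ring
  simp only [this, Complex.norm_exp, Complex.ofReal_re]

set_option maxHeartbeats 1000000 in
theorem stmt2 (d : ℕ)
    (K : EuclideanSpace ℝ (Fin d) → ℝ) (p : EuclideanSpace ℝ (Fin d) → ℝ)
    (C₁ γ C α β₀ : ℝ) (hC₁ : 0 < C₁) (hγ : 0 < γ) (hC : 0 < C) (hα : 0 < α)
    (hβ₀ : 0 ≤ β₀)
    (hK0 : ∀ v, 0 ≤ K v) (hKint : Integrable K)
    (hK1 : ∫ v, K v = 1)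
    (hKmom : ∫ v, K v • v = (0 : EuclideanSpace ℝ (Fin d)))
    (hp : ContDiff ℝ 2 p)
    (hp2 : ∀ x, ‖iteratedFDeriv ℝ 2 p x‖ ≤ C₁ * Real.exp (-γ * ‖x‖ ^ 2))
    (hKtail : ∀ v, K v ≤ C * Real.exp (-α * ‖v‖ ^ (2 + β₀))) :
    ∃ Ct γ' ε₀ : ℝ, 0 < Ct ∧ 0 < γ' ∧ 0 < ε₀ ∧
      ∀ ε : ℝ, 0 < ε → ε < ε₀ → ∀ x,
        |(∫ v, K v * p (x + ε • v)) - p x| ≤ Ct * ε ^ 2 * Real.exp (-γ' * ‖x‖ ^ 2) := by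
  -- the weight function
  set W : EuclideanSpace ℝ (Fin d) → ℝ :=
    fun v => K v * (‖v‖ ^ 2 * Real.exp (α / 4 * ‖v‖ ^ 2)) with hWdef
  set B : ℝ := C * (Real.exp (α / 2) + 2 / α) with hBdef
  have hB : 0 < B := by positivity
  -- pointwise bound for the weight
  have hker0 : ∀ v : EuclideanSpace ℝ (Fin d),
      K v * ‖v‖ ^ 2 * Real.exp (α / 2 * ‖v‖ ^ 2) ≤ B := by
    intro v
    have hv0 : (0 : ℝ) ≤ ‖v‖ := norm_nonneg v
    rcases le_or_gt ‖v‖ 1 with hle | hgt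
    · have hK' : K v ≤ C := by
        refine (hKtail v).trans ?_
        have : Real.exp (-α * ‖v‖ ^ (2 + β₀)) ≤ 1 := by
          rw [Real.exp_le_one_iff]
          have : (0 : ℝ) ≤ ‖v‖ ^ (2 + β₀) := Real.rpow_nonneg hv0 _
          nlinarith
        nlinarith
      have h2 : ‖v‖ ^ 2 ≤ 1 := by nlinarith
      have h3 : Real.exp (α / 2 * ‖v‖ ^ 2) ≤ Real.exp (α / 2) := by
        apply Real.exp_le_exp.mpr; nlinarith
      calc K v * ‖v‖ ^ 2 * Real.exp (α / 2 * ‖v‖ ^ 2) ≤ C * 1 * Real.exp (α / 2) := by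
            apply mul_le_mul (by apply mul_le_mul hK' h2 (by positivity) hC.le) h3
              (by positivity) (by positivity)
        _ ≤ B := by rw [hBdef]; nlinarith [Real.exp_pos (α / 2), mul_pos hC (by positivity : (0:ℝ) < 2 / α)]
    · -- large v: K v ≤ C exp(-α ‖v‖²)
      have hK' : K v ≤ C * Real.exp (-α * ‖v‖ ^ 2) := by
        refine (hKtail v).trans ?_
        have h1 : (‖v‖ : ℝ) ^ (2 : ℝ) ≤ ‖v‖ ^ (2 + β₀) :=
          Real.rpow_le_rpow_of_exponent_le hgt.le (by linarith)
        have h2 : (‖v‖ : ℝ) ^ (2 : ℝ) = ‖v‖ ^ 2 := by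
          rw [show (2 : ℝ) = ((2 : ℕ) : ℝ) by norm_num, Real.rpow_natCast]
        have h3 : Real.exp (-α * ‖v‖ ^ (2 + β₀)) ≤ Real.exp (-α * ‖v‖ ^ 2) := by
          apply Real.exp_le_exp.mpr
          rw [← h2]
          nlinarith [h1]
        exact mul_le_mul_of_nonneg_left h3 hC.le
      have key : ‖v‖ ^ 2 * Real.exp (-(α / 2) * ‖v‖ ^ 2) ≤ 2 / α := by
        have hs : (0 : ℝ) ≤ α / 2 * ‖v‖ ^ 2 := by positivity
        have h1 : α / 2 * ‖v‖ ^ 2 ≤ Real.exp (α / 2 * ‖v‖ ^ 2) := by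
          nlinarith [Real.add_one_le_exp (α / 2 * ‖v‖ ^ 2)]
        have hepos := Real.exp_pos (α / 2 * ‖v‖ ^ 2)
        have h4 : (α / 2 * ‖v‖ ^ 2) * Real.exp (-(α / 2 * ‖v‖ ^ 2)) ≤ 1 := by
          rw [Real.exp_neg]
          calc (α / 2 * ‖v‖ ^ 2) * (Real.exp (α / 2 * ‖v‖ ^ 2))⁻¹
              ≤ Real.exp (α / 2 * ‖v‖ ^ 2) * (Real.exp (α / 2 * ‖v‖ ^ 2))⁻¹ :=
                mul_le_mul_of_nonneg_right h1 (inv_nonneg.mpr hepos.le)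
            _ = 1 := mul_inv_cancel₀ hepos.ne'
        rw [le_div_iff₀ hα]
        have h5 : -(α / 2) * ‖v‖ ^ 2 = -(α / 2 * ‖v‖ ^ 2) := by ring
        rw [h5]
        nlinarith [h4]
      have hsplit : Real.exp (-α * ‖v‖ ^ 2) * Real.exp (α / 2 * ‖v‖ ^ 2)
          = Real.exp (-(α / 2) * ‖v‖ ^ 2) := by
        rw [← Real.exp_add]; ring_nf
      calc K v * ‖v‖ ^ 2 * Real.exp (α / 2 * ‖v‖ ^ 2)
          ≤ C * Real.exp (-α * ‖v‖ ^ 2) * ‖v‖ ^ 2 * Real.exp (α / 2 * ‖v‖ ^ 2) :=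
            mul_le_mul_of_nonneg_right (mul_le_mul_of_nonneg_right hK' (sq_nonneg ‖v‖))
              (Real.exp_pos _).le
        _ = C * (‖v‖ ^ 2 * Real.exp (-(α / 2) * ‖v‖ ^ 2)) := by
            rw [← hsplit]; ring
        _ ≤ C * (2 / α) := by apply mul_le_mul_of_nonneg_left key hC.le
        _ ≤ B := by rw [hBdef]; nlinarith [Real.exp_pos (α / 2)]
  have hker : ∀ v : EuclideanSpace ℝ (Fin d), W v ≤ B * Real.exp (-(α / 4) * ‖v‖ ^ 2) := by
    intro v
    have hsplit : Real.exp (α / 4 * ‖v‖ ^ 2)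
        = Real.exp (α / 2 * ‖v‖ ^ 2) * Real.exp (-(α / 4) * ‖v‖ ^ 2) := by
      rw [← Real.exp_add]; ring_nf
    have he := Real.exp_pos (-(α / 4) * ‖v‖ ^ 2)
    calc W v = K v * ‖v‖ ^ 2 * Real.exp (α / 2 * ‖v‖ ^ 2) * Real.exp (-(α / 4) * ‖v‖ ^ 2) := by
          rw [hWdef]; simp only []; rw [hsplit]; ring
      _ ≤ B * Real.exp (-(α / 4) * ‖v‖ ^ 2) := by
          apply mul_le_mul_of_nonneg_right (hker0 v) he.le
  have hW0 : ∀ v, 0 ≤ W v := fun v => by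
    have := hK0 v; positivity
  have hWmeas : AEStronglyMeasurable W volume := by
    apply hKint.aestronglyMeasurable.mul
    exact ((continuous_norm.pow 2).mul
      (Real.continuous_exp.comp (continuous_const.mul (continuous_norm.pow 2)))).aestronglyMeasurable
  have hWint : Integrable W := by
    refine Integrable.mono' ((gauss_integrable d (b := α / 4) (by positivity)).const_mul B)
      hWmeas (Filter.Eventually.of_forall fun v => ?_)
    rw [Real.norm_eq_abs, abs_of_nonneg (hW0 v)]
    exact hker v
  have hI0 : 0 ≤ ∫ v, W v := integral_nonneg hW0
  -- moment integrability
  have hmomInt : Integrable (fun v : EuclideanSpace ℝ (Fin d) => K v • v) := by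
    refine Integrable.mono' (hKint.add hWint)
      (hKint.aestronglyMeasurable.smul aestronglyMeasurable_id)
      (Filter.Eventually.of_forall fun v => ?_)
    rw [norm_smul, Real.norm_eq_abs, abs_of_nonneg (hK0 v)]
    have h1 : ‖v‖ ≤ 1 + ‖v‖ ^ 2 := by nlinarith [sq_nonneg (‖v‖ - 1)]
    have h2 : (1 : ℝ) ≤ Real.exp (α / 4 * ‖v‖ ^ 2) := Real.one_le_exp (by positivity)
    have h0 := hK0 v
    show K v * ‖v‖ ≤ K v + K v * (‖v‖ ^ 2 * Real.exp (α / 4 * ‖v‖ ^ 2))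
    nlinarith [sq_nonneg ‖v‖, norm_nonneg v, mul_nonneg h0 (sq_nonneg ‖v‖)]
  refine ⟨C₁ * (∫ v, W v) + 1, γ / 2, Real.sqrt (α / (4 * γ)),
    by positivity, by positivity, Real.sqrt_pos.mpr (by positivity), ?_⟩
  intro ε hε hεlt x
  have hε2 : γ * ε ^ 2 ≤ α / 4 := by
    have h1 : ε ^ 2 ≤ α / (4 * γ) := by
      have := pow_le_pow_left₀ hε.le hεlt.le 2
      rwa [Real.sq_sqrt (by positivity : (0:ℝ) ≤ α / (4 * γ))] at this
    calc γ * ε ^ 2 ≤ γ * (α / (4 * γ)) := by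
          apply mul_le_mul_of_nonneg_left h1 hγ.le
      _ = α / 4 := by field_simp
  set L : EuclideanSpace ℝ (Fin d) →L[ℝ] ℝ := fderiv ℝ p x with hLdef
  -- Taylor estimate
  have hdiff1 : Differentiable ℝ p := hp.differentiable (by norm_num)
  have hcd : ContDiff ℝ 1 (fderiv ℝ p) := hp.fderiv_right (by norm_num)
  have hdiff2 : Differentiable ℝ (fderiv ℝ p) := hcd.differentiable one_ne_zero
  have hTay : ∀ v : EuclideanSpace ℝ (Fin d),
      ‖p (x + ε • v) - p x - L (ε • v)‖ ≤
      C₁ * Real.exp (-(γ / 2) * ‖x‖ ^ 2) * Real.exp (α / 4 * ‖v‖ ^ 2) * (ε ^ 2 * ‖v‖ ^ 2) := by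
    intro v
    set y := x + ε • v with hydef
    set M := C₁ * Real.exp (-(γ / 2) * ‖x‖ ^ 2) * Real.exp (α / 4 * ‖v‖ ^ 2) with hMdef
    have hM0 : 0 ≤ M := by positivity
    have hdist : ∀ z ∈ segment ℝ x y, ‖z - x‖ ≤ ε * ‖v‖ := by
      intro z hz
      rw [segment_eq_image'] at hz
      obtain ⟨t, ht, rfl⟩ := hz
      have hyx : y - x = ε • v := by rw [hydef]; abel
      rw [add_sub_cancel_left, hyx, norm_smul, norm_smul, Real.norm_eq_abs, Real.norm_eq_abs,
        abs_of_nonneg ht.1, abs_of_nonneg hε.le]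
      nlinarith [mul_nonneg (mul_nonneg hε.le (norm_nonneg v)) (sub_nonneg.mpr ht.2)]
    have hseg : ∀ z ∈ segment ℝ x y, ‖fderiv ℝ (fderiv ℝ p) z‖ ≤ M := by
      intro z hz
      have hnorm : ‖fderiv ℝ (fderiv ℝ p) z‖ ≤ ‖iteratedFDeriv ℝ 2 p z‖ := by
        apply ContinuousLinearMap.opNorm_le_bound _ (norm_nonneg _)
        intro u
        rw [mul_comm]
        apply ContinuousLinearMap.opNorm_le_bound _ (by positivity)
        intro w
        have h := (iteratedFDeriv ℝ 2 p z).le_opNorm ![u, w]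
        rw [iteratedFDeriv_two_apply] at h
        simpa [Fin.prod_univ_two, mul_comm, mul_assoc, mul_left_comm] using h
      have hd := hdist z hz
      have hxz : ‖x‖ ≤ ‖z‖ + ε * ‖v‖ := by
        have h0 : ‖x‖ ≤ ‖z‖ + ‖x - z‖ := by
          calc ‖x‖ = ‖z + (x - z)‖ := by congr 1; abel
            _ ≤ ‖z‖ + ‖x - z‖ := norm_add_le _ _
        rw [norm_sub_rev] at h0
        linarith [hd]
      have hexp : -γ * ‖z‖ ^ 2 ≤ -(γ / 2) * ‖x‖ ^ 2 + α / 4 * ‖v‖ ^ 2 := by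
        have h2 : ‖x‖ ^ 2 ≤ 2 * ‖z‖ ^ 2 + 2 * (ε * ‖v‖) ^ 2 := by
          nlinarith [norm_nonneg x, norm_nonneg z, mul_nonneg hε.le (norm_nonneg v),
            mul_self_le_mul_self (norm_nonneg x) hxz, sq_nonneg (‖z‖ - ε * ‖v‖)]
        have h3 : γ * (ε * ‖v‖) ^ 2 ≤ α / 4 * ‖v‖ ^ 2 := by
          have := mul_le_mul_of_nonneg_right hε2 (sq_nonneg ‖v‖)
          nlinarith
        nlinarith [mul_nonneg hγ.le (sub_nonneg.mpr h2)]
      calc ‖fderiv ℝ (fderiv ℝ p) z‖ ≤ ‖iteratedFDeriv ℝ 2 p z‖ := hnorm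
        _ ≤ C₁ * Real.exp (-γ * ‖z‖ ^ 2) := hp2 z
        _ ≤ M := by
            rw [hMdef, mul_assoc, ← Real.exp_add]
            apply mul_le_mul_of_nonneg_left (Real.exp_le_exp.mpr hexp) hC₁.le
    have hlip : ∀ z ∈ segment ℝ x y, ‖fderiv ℝ p z - L‖ ≤ M * (ε * ‖v‖) := by
      intro z hz
      have h := (convex_segment x y).norm_image_sub_le_of_norm_fderiv_le
        (fun w _ => hdiff2 w) hseg
        (left_mem_segment ℝ x y) hz
      calc ‖fderiv ℝ p z - L‖ = ‖fderiv ℝ p z - fderiv ℝ p x‖ := by rw [hLdef]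
        _ ≤ M * ‖z - x‖ := h
        _ ≤ M * (ε * ‖v‖) := mul_le_mul_of_nonneg_left (hdist z hz) hM0
    have h := (convex_segment x y).norm_image_sub_le_of_norm_fderiv_le'
      (fun w _ => hdiff1 w) hlip
      (left_mem_segment ℝ x y) (right_mem_segment ℝ x y)
    have hyx : y - x = ε • v := by rw [hydef]; abel
    rw [hyx, norm_smul, Real.norm_eq_abs ε, abs_of_nonneg hε.le] at h
    calc ‖p y - p x - L (ε • v)‖ ≤ M * (ε * ‖v‖) * (ε * ‖v‖) := h
      _ = M * (ε ^ 2 * ‖v‖ ^ 2) := by ring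
  -- decomposition
  have hR : ∀ v : EuclideanSpace ℝ (Fin d), K v * p (x + ε • v)
      = K v * p x + L (ε • (K v • v)) + K v * (p (x + ε • v) - p x - L (ε • v)) := by
    intro v
    have h1 : L (ε • (K v • v)) = K v * L (ε • v) := by
      rw [smul_comm ε (K v) v, L.map_smul, smul_eq_mul]
    rw [h1]; ring
  have hf1 : Integrable (fun v : EuclideanSpace ℝ (Fin d) => K v * p x) := hKint.mul_const _
  have hf2 : Integrable (fun v : EuclideanSpace ℝ (Fin d) => L (ε • (K v • v))) :=
    L.integrable_comp (hmomInt.smul ε)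
  set c : ℝ := C₁ * Real.exp (-(γ / 2) * ‖x‖ ^ 2) * ε ^ 2 with hcdef
  have hc0 : 0 ≤ c := by positivity
  have hbd : ∀ v : EuclideanSpace ℝ (Fin d),
      ‖K v * (p (x + ε • v) - p x - L (ε • v))‖ ≤ c * W v := by
    intro v
    rw [Real.norm_eq_abs, abs_mul, abs_of_nonneg (hK0 v)]
    have h := hTay v
    rw [Real.norm_eq_abs] at h
    calc K v * |p (x + ε • v) - p x - L (ε • v)|
        ≤ K v * (C₁ * Real.exp (-(γ / 2) * ‖x‖ ^ 2) * Real.exp (α / 4 * ‖v‖ ^ 2)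
            * (ε ^ 2 * ‖v‖ ^ 2)) := mul_le_mul_of_nonneg_left h (hK0 v)
      _ = c * W v := by rw [hcdef, hWdef]; ring
  have hf3 : Integrable (fun v : EuclideanSpace ℝ (Fin d)
      => K v * (p (x + ε • v) - p x - L (ε • v))) := by
    refine Integrable.mono' (hWint.const_mul c) ?_ (Filter.Eventually.of_forall hbd)
    apply hKint.aestronglyMeasurable.mul
    have hcont : Continuous (fun v : EuclideanSpace ℝ (Fin d)
        => p (x + ε • v) - p x - L (ε • v)) := by
      have h1 : Continuous (fun v : EuclideanSpace ℝ (Fin d) => x + ε • v) :=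
        continuous_const.add (continuous_const_smul ε)
      exact ((hp.continuous.comp h1).sub continuous_const).sub
        (L.continuous.comp (continuous_const_smul ε))
    exact hcont.aestronglyMeasurable
  have hint : (∫ v, K v * p (x + ε • v))
      = p x + ∫ v, K v * (p (x + ε • v) - p x - L (ε • v)) := by
    have hf12 : Integrable (fun v : EuclideanSpace ℝ (Fin d)
        => K v * p x + L (ε • (K v • v))) := hf1.add hf2
    have e3 : (∫ v, (K v * p x + L (ε • (K v • v))
          + K v * (p (x + ε • v) - p x - L (ε • v))))
        = (∫ v, (K v * p x + L (ε • (K v • v))))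
          + ∫ v, K v * (p (x + ε • v) - p x - L (ε • v)) := integral_add hf12 hf3
    have e4 : (∫ v, (K v * p x + L (ε • (K v • v))))
        = (∫ v, K v * p x) + ∫ v, L (ε • (K v • v)) := integral_add hf1 hf2
    have e1 : (∫ v, K v * p x) = p x := by
      rw [integral_mul_const, hK1, one_mul]
    have hmom2 : Integrable (fun v : EuclideanSpace ℝ (Fin d)
        => ε • (K v • v)) := hmomInt.smul ε
    have e2 : (∫ v, L (ε • (K v • v))) = 0 := by
      rw [L.integral_comp_comm hmom2]
      have e5 : (∫ v, ε • (K v • v)) = ε • ∫ v, K v • v := integral_smul ε _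
      rw [e5, hKmom, smul_zero, map_zero]
    rw [integral_congr_ae (Filter.Eventually.of_forall hR), e3, e4, e1, e2, add_zero]
  rw [hint, add_sub_cancel_left]
  have hfinal : |∫ v, K v * (p (x + ε • v) - p x - L (ε • v))| ≤ c * ∫ v, W v := by
    rw [← Real.norm_eq_abs]
    calc ‖∫ v, K v * (p (x + ε • v) - p x - L (ε • v))‖
        ≤ ∫ v, c * W v := norm_integral_le_of_norm_le (hWint.const_mul c)
          (Filter.Eventually.of_forall hbd)
      _ = c * ∫ v, W v := integral_const_mul c W
  refine hfinal.trans ?_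
  rw [hcdef]
  have he := Real.exp_pos (-(γ / 2) * ‖x‖ ^ 2)
  calc C₁ * Real.exp (-(γ / 2) * ‖x‖ ^ 2) * ε ^ 2 * ∫ v, W v
      = (C₁ * ∫ v, W v) * ε ^ 2 * Real.exp (-(γ / 2) * ‖x‖ ^ 2) := by ring
    _ ≤ (C₁ * (∫ v, W v) + 1) * ε ^ 2 * Real.exp (-(γ / 2) * ‖x‖ ^ 2) := by
        apply mul_le_mul_of_nonneg_right _ he.le
        apply mul_le_mul_of_nonneg_right _ (sq_nonneg ε)
        linarith
end

section
/- Let $(Z_{nm})_{1 \le n \le N, 1 \le m \le M}$ be real square-integrable random variables such that $Z_{nm}$ and $Z_{n'm'}$ are independent whenever $n \ne n'$ and $m \ne m'$, all $Z_{nm}$ have common mean $h$, common second moment, and the covariances $\mathbb{E}[Z_{nm}Z_{nm'}] =: h^{(1,2)}$ (for $m \ne m'$) and $\mathbb{E}[Z_{nm}Z_{n'm}] =: h^{(2,1)}$ (for $n \ne n'$) do not depend on the indices chosen. Then the sample mean $\widehat{h} := \frac{1}{NM}\sum_{n=1}^N\sum_{m=1}^M Z_{nm}$ satisfies $\operatorname{Var}(\widehat{h})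 = \frac{1-M-N}{NM}h^2 + \frac{M-1}{NM}h^{(1,2)} + \frac{N-1}{NM}h^{(2,1)} + \frac{1}{NM}\mathbb{E}[Z_{11}^2]$. -/
open MeasureTheory ProbabilityTheory

private lemma sum_if_fin (K : ℕ) (a b : ℝ) :
    ∑ i : Fin K, ∑ j : Fin K, (if i = j then a else b) = K * a + K * (K - 1) * b := by
  have : ∀ i : Fin K, ∑ j : Fin K, (if i = j then a else b)
      = a + (K - 1) * b := by
    intro i
    have : ∀ j : Fin K, (if i = j then a else b) = (if i = j then a - b else 0) + b := by
      intro j; split <;> ring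
    simp only [this, Finset.sum_add_distrib, Finset.sum_ite_eq, Finset.mem_univ, if_true,
      Finset.sum_const, Finset.card_univ, Fintype.card_fin, nsmul_eq_mul]
    ring
  simp only [this, Finset.sum_const, Finset.card_univ, Fintype.card_fin, nsmul_eq_mul]
  ring

theorem stmt4 {Ω : Type*} [MeasurableSpace Ω] (μ : Measure Ω)
    [IsProbabilityMeasure μ]
    (N M : ℕ) (hN : 0 < N) (hM : 0 < M)
    (Z : Fin N → Fin M → Ω → ℝ)
    (hL2 : ∀ n m, MemLp (Z n m) 2 μ)
    (hindep : ∀ n n' m m', n ≠ n' → m ≠ m' →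
      IndepFun (Z n m) (Z n' m') μ)
    (h h12 h21 s : ℝ)
    (hmean : ∀ n m, ∫ ω, Z n m ω ∂μ = h)
    (hsecond : ∀ n m, ∫ ω, (Z n m ω) ^ 2 ∂μ = s)
    (hcov12 : ∀ n m m', m ≠ m' → ∫ ω, Z n m ω * Z n m' ω ∂μ = h12)
    (hcov21 : ∀ n n' m, n ≠ n' → ∫ ω, Z n m ω * Z n' m ω ∂μ = h21) :
    variance (fun ω => (1 / (N * M : ℝ)) * ∑ n, ∑ m, Z n m ω) μ =
      ((1 - M - N : ℝ) / (N * M : ℝ)) * h ^ 2 + ((M - 1 : ℝ) / (N * M : ℝ)) * h12 +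
        ((N - 1 : ℝ) / (N * M : ℝ)) * h21 + (1 / (N * M : ℝ)) * s := by
  have hNM : (0 : ℝ) < (N : ℝ) * M := by positivity
  have hint : ∀ n m, Integrable (Z n m) μ := fun n m => (hL2 n m).integrable one_le_two
  have hmul : ∀ n m n' m', Integrable (fun ω => Z n m ω * Z n' m' ω) μ := by
    intro n m n' m'
    have := ((hL2 n' m').smul (hL2 n m)
      (r := 1)).integrable le_rfl
    exact this
  -- value of each product integral
  have key : ∀ n m n' m', ∫ ω, Z n m ω * Z n' m' ω ∂μ =
      if n = n' then (if m = m' then s else h12) else (if m = m' then h21 else h ^ 2) := by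
    intro n m n' m'
    by_cases hn : n = n'
    · subst hn
      by_cases hm : m = m'
      · subst hm
        simp only [if_true, ← hsecond n m]
        exact integral_congr_ae (Filter.Eventually.of_forall fun ω => (sq (Z n m ω)).symm)
      · simp [hm, hcov12 n m m' hm]
    · by_cases hm : m = m'
      · subst hm
        simp [hn, hcov21 n n' m hn]
      · have hI := (hindep n n' m m' hn hm).integral_mul_eq_mul_integral (hint n m).aestronglyMeasurable (hint n' m').aestronglyMeasurable
        simp only [hn, hm, if_false]
        calc ∫ ω, Z n m ω * Z n' m' ω ∂μ = ∫ ω, (Z n m * Z n' m') ω ∂μ := rfl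
          _ = (∫ ω, Z n m ω ∂μ) * ∫ ω, Z n' m' ω ∂μ := hI
          _ = h ^ 2 := by rw [hmean, hmean]; ring
  set S : Ω → ℝ := fun ω => ∑ n, ∑ m, Z n m ω with hS
  have hSint : Integrable S μ :=
    integrable_finset_sum _ fun n _ => integrable_finset_sum _ fun m _ => hint n m
  have hSL2 : MemLp S 2 μ := by
    have := memLp_finset_sum' (μ := μ) Finset.univ
      (fun n (_ : n ∈ Finset.univ) =>
        memLp_finset_sum' Finset.univ fun m (_ : m ∈ Finset.univ) => hL2 n m)
    have heq : (∑ n : Fin N, ∑ m : Fin M, Z n m) = S := by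
      funext ω; simp [hS, Finset.sum_apply]
    rwa [heq] at this
  have hXL2 : MemLp (fun ω => (1 / (N * M : ℝ)) * S ω) 2 μ := hSL2.const_mul _
  -- mean of S
  have hmeanS : ∫ ω, S ω ∂μ = (N : ℝ) * M * h := by
    rw [hS]
    rw [integral_finset_sum _ fun n _ => integrable_finset_sum _ fun m _ => hint n m]
    have : ∀ n : Fin N, ∫ ω, ∑ m, Z n m ω ∂μ = (M : ℝ) * h := by
      intro n
      rw [integral_finset_sum _ fun m _ => hint n m]
      simp [hmean]
    simp [this]; ring
  -- second moment of S
  have hsqS : ∫ ω, S ω ^ 2 ∂μ =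
      (N : ℝ) * ((M : ℝ) * s + (M : ℝ) * ((M : ℝ) - 1) * h12)
      + (N : ℝ) * ((N : ℝ) - 1) *
        ((M : ℝ) * h21 + (M : ℝ) * ((M : ℝ) - 1) * h ^ 2) := by
    have hexp : ∀ ω, S ω ^ 2 = ∑ n, ∑ n', ∑ m, ∑ m', Z n m ω * Z n' m' ω := by
      intro ω
      rw [hS, sq, Finset.sum_mul_sum]
      refine Finset.sum_congr rfl fun n _ => Finset.sum_congr rfl fun n' _ => ?_
      rw [Finset.sum_mul_sum]
    have hintm : ∀ (n n' : Fin N) (m : Fin M),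
        Integrable (fun ω => ∑ m', Z n m ω * Z n' m' ω) μ :=
      fun n n' m => integrable_finset_sum _ fun m' _ => hmul n m n' m'
    have hintmm : ∀ (n n' : Fin N),
        Integrable (fun ω => ∑ m, ∑ m', Z n m ω * Z n' m' ω) μ :=
      fun n n' => integrable_finset_sum _ fun m _ => hintm n n' m
    have hintn : ∀ n : Fin N,
        Integrable (fun ω => ∑ n', ∑ m, ∑ m', Z n m ω * Z n' m' ω) μ :=
      fun n => integrable_finset_sum _ fun n' _ => hintmm n n'
    calc ∫ ω, S ω ^ 2 ∂μ
        = ∫ ω, ∑ n, ∑ n', ∑ m, ∑ m', Z n m ω * Z n' m' ω ∂μ := by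
          exact integral_congr_ae (Filter.Eventually.of_forall fun ω => hexp ω)
      _ = ∑ n, ∑ n', ∑ m : Fin M, ∑ m' : Fin M,
            ∫ ω, Z n m ω * Z n' m' ω ∂μ := by
          rw [integral_finset_sum _ fun n _ => hintn n]
          refine Finset.sum_congr rfl fun n _ => ?_
          rw [integral_finset_sum _ fun n' _ => hintmm n n']
          refine Finset.sum_congr rfl fun n' _ => ?_
          rw [integral_finset_sum _ fun m _ => hintm n n' m]
          refine Finset.sum_congr rfl fun m _ => ?_
          rw [integral_finset_sum _ fun m' _ => hmul n m n' m']
      _ = ∑ n : Fin N, ∑ n' : Fin N,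
            (if n = n' then ((M : ℝ) * s + (M : ℝ) * ((M : ℝ) - 1) * h12)
             else ((M : ℝ) * h21 + (M : ℝ) * ((M : ℝ) - 1) * h ^ 2)) := by
          refine Finset.sum_congr rfl fun n _ => Finset.sum_congr rfl fun n' _ => ?_
          simp only [key]
          by_cases hn : n = n' <;> simp only [hn, if_true, if_false] <;>
            exact sum_if_fin M _ _
      _ = _ := by rw [sum_if_fin N]
  rw [variance_eq_sub hXL2]
  have h1 : ∫ ω, (fun ω => (1 / (N * M : ℝ)) * S ω) ω ∂μ = h := by
    rw [integral_const_mul, hmeanS]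
    field_simp
  have h2 : ∫ ω, ((fun ω => (1 / (N * M : ℝ)) * S ω) ^ 2) ω ∂μ
      = (1 / ((N : ℝ) * M)) ^ 2 * ∫ ω, S ω ^ 2 ∂μ := by
    simp only [Pi.pow_apply, mul_pow]
    rw [integral_const_mul]
  simp only [Pi.pow_apply] at h2 ⊢
  rw [show (μ[fun ω => 1 / (↑N * ↑M) * S ω]) = h from h1] at *
  rw [show (μ[fun ω => (1 / (↑N * ↑M) * S ω) ^ 2])
      = (1 / ((N : ℝ) * M)) ^ 2 * ∫ ω, S ω ^ 2 ∂μ from h2, hsqS]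
  field_simp
  ring
end

section
/- Let $X, Y, X_N, Y_N$ be as follows: $Y > 0$, $X$ constants, $X_N, Y_N$ square-integrable random variables with $\mathbb{E}[(X_N-X)^2] = O(N^{-p})$, $\mathbb{E}[(Y_N-Y)^2] = O(N^{-p})$, $\operatorname{Var}(Y_N) = O(N^{-p})$ and $\mathbb{E}[Y_N] \to Y$ as $N \to \infty$. Define $\zeta_N := \frac{X_N}{Y_N}\mathbf{1}_{\{Y_N > D\}}$ for a fixed constant $0 < D < Y$ (assumed to satisfy $D < \mathbb{E}[Y_N]$ for $N$ large). Then $\mathbb{E}\left[\left(\zeta_N - \frac{X}{Y}\right)^2\right] = O(N^{-p})$ as $N \to \infty$. -/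
open MeasureTheory ProbabilityTheory Filter Asymptotics

lemma ratio_sq_bound {a b X Y D : ℝ} (hD : 0 < D) (hb : D < b) (hY : 0 < Y) :
    (a / b - X / Y) ^ 2 ≤ 2 / D ^ 2 * (a - X) ^ 2
      + 2 * X ^ 2 / (D ^ 2 * Y ^ 2) * (b - Y) ^ 2 := by
  have hb0 : 0 < b := hD.trans hb
  have h1 : a / b - X / Y = (a * Y - X * b) / (b * Y) := by
    field_simp
  rw [h1, div_pow]
  have h2 : (a * Y - X * b) ^ 2 / (b * Y) ^ 2 ≤ (a * Y - X * b) ^ 2 / (D * Y) ^ 2 := by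
    apply div_le_div_of_nonneg_left (sq_nonneg _) (by positivity)
    have hDb : D * Y ≤ b * Y := by nlinarith
    nlinarith [mul_pos hD hY]
  refine h2.trans ?_
  have h3 : (a * Y - X * b) ^ 2 ≤ 2 * Y ^ 2 * (a - X) ^ 2 + 2 * X ^ 2 * (b - Y) ^ 2 := by
    nlinarith [sq_nonneg ((a - X) * Y + X * (b - Y))]
  have h4 : (2 * Y ^ 2 * (a - X) ^ 2 + 2 * X ^ 2 * (b - Y) ^ 2) / (D * Y) ^ 2
      = 2 / D ^ 2 * (a - X) ^ 2 + 2 * X ^ 2 / (D ^ 2 * Y ^ 2) * (b - Y) ^ 2 := by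
    field_simp
  rw [← h4]
  exact div_le_div_of_nonneg_right h3 (by positivity) |>.trans_eq rfl

theorem stmt7 {Ω : Type*} [MeasurableSpace Ω] (μ : Measure Ω)
    [IsProbabilityMeasure μ]
    (X Y : ℝ) (hY : 0 < Y) (p : ℝ) (hp : 0 < p)
    (XN YN : ℕ → Ω → ℝ)
    (hXL2 : ∀ N, MemLp (XN N) 2 μ) (hYL2 : ∀ N, MemLp (YN N) 2 μ)
    (hXmse : (fun N : ℕ => ∫ ω, (XN N ω - X) ^ 2 ∂μ) =O[atTop]
      fun N : ℕ => (N : ℝ) ^ (-p))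
    (hYmse : (fun N : ℕ => ∫ ω, (YN N ω - Y) ^ 2 ∂μ) =O[atTop]
      fun N : ℕ => (N : ℝ) ^ (-p))
    (hVar : (fun N : ℕ => variance (YN N) μ) =O[atTop] fun N : ℕ => (N : ℝ) ^ (-p))
    (hEY : Tendsto (fun N : ℕ => ∫ ω, YN N ω ∂μ) atTop (nhds Y))
    (D : ℝ) (hD0 : 0 < D) (hDY : D < Y) :
    (fun N : ℕ => ∫ ω,
        ((XN N ω / YN N ω) * Set.indicator {ω | D < YN N ω} (fun _ => (1 : ℝ)) ω
          - X / Y) ^ 2 ∂μ) =O[atTop] fun N : ℕ => (N : ℝ) ^ (-p) := by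
  set c : ℝ := X / Y with hcdef
  set A : ℝ := 2 / D ^ 2 with hAdef
  set B : ℝ := 2 * X ^ 2 / (D ^ 2 * Y ^ 2) with hBdef
  set K : ℝ := 4 * c ^ 2 / (Y - D) ^ 2 with hKdef
  have hg : (fun N : ℕ => A * (∫ ω, (XN N ω - X) ^ 2 ∂μ)
      + B * (∫ ω, (YN N ω - Y) ^ 2 ∂μ) + K * variance (YN N) μ)
      =O[atTop] fun N : ℕ => (N : ℝ) ^ (-p) :=
    ((hXmse.const_mul_left A).add (hYmse.const_mul_left B)).add (hVar.const_mul_left K)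
  have hmid : (Y + D) / 2 < Y := by linarith
  have hEev : ∀ᶠ N in atTop, (Y + D) / 2 ≤ ∫ ω, YN N ω ∂μ :=
    (hEY.eventually (eventually_gt_nhds hmid)).mono fun N h => h.le
  -- the key eventual bound
  have hbound : ∀ᶠ N in atTop,
      (∫ ω, ((XN N ω / YN N ω) * Set.indicator {ω | D < YN N ω} (fun _ => (1 : ℝ)) ω
          - c) ^ 2 ∂μ)
      ≤ A * (∫ ω, (XN N ω - X) ^ 2 ∂μ)
        + B * (∫ ω, (YN N ω - Y) ^ 2 ∂μ) + K * variance (YN N) μ := by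
    filter_upwards [hEev] with N hE
    set X' := (hXL2 N).1.mk (XN N) with hX'def
    set Y' := (hYL2 N).1.mk (YN N) with hY'def
    have hXae : XN N =ᵐ[μ] X' := (hXL2 N).1.ae_eq_mk
    have hYae : YN N =ᵐ[μ] Y' := (hYL2 N).1.ae_eq_mk
    have hX'm : StronglyMeasurable X' := (hXL2 N).1.stronglyMeasurable_mk
    have hY'm : StronglyMeasurable Y' := (hYL2 N).1.stronglyMeasurable_mk
    have hX'L2 : MemLp X' 2 μ := (hXL2 N).ae_eq hXae
    have hY'L2 : MemLp Y' 2 μ := (hYL2 N).ae_eq hYae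
    have hEeq : ∫ ω, Y' ω ∂μ = ∫ ω, YN N ω ∂μ := integral_congr_ae hYae.symm
    have hE' : (Y + D) / 2 ≤ ∫ ω, Y' ω ∂μ := by rw [hEeq]; exact hE
    have hED : 0 < (∫ ω, Y' ω ∂μ) - D := by linarith
    -- congruence for the LHS integral
    have hLHS : (∫ ω, ((XN N ω / YN N ω)
          * Set.indicator {ω | D < YN N ω} (fun _ => (1 : ℝ)) ω - c) ^ 2 ∂μ)
        = ∫ ω, ((X' ω / Y' ω)
          * Set.indicator {ω | D < Y' ω} (fun _ => (1 : ℝ)) ω - c) ^ 2 ∂μ := by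
      apply integral_congr_ae
      filter_upwards [hXae, hYae] with ω h1 h2
      simp only [Set.indicator_apply, Set.mem_setOf_eq, h1, h2]
    rw [hLHS]
    -- pointwise bound
    set S : Set Ω := {ω | Y' ω ≤ D} with hSdef
    have hSmeas : MeasurableSet S := measurableSet_le hY'm.measurable measurable_const
    have hpt : ∀ ω, ((X' ω / Y' ω)
          * Set.indicator {ω | D < Y' ω} (fun _ => (1 : ℝ)) ω - c) ^ 2
        ≤ A * (X' ω - X) ^ 2 + B * (Y' ω - Y) ^ 2
          + Set.indicator S (fun _ => c ^ 2) ω := by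
      intro ω
      by_cases hω : D < Y' ω
      · have h1 : Set.indicator {ω | D < Y' ω} (fun _ => (1 : ℝ)) ω = 1 :=
          Set.indicator_of_mem (show ω ∈ {ω | D < Y' ω} from hω) _
        have h2 : Set.indicator S (fun _ => c ^ 2) ω = 0 :=
          Set.indicator_of_notMem (show ω ∉ S from by simp [hSdef]; linarith) _
        rw [h1, h2, mul_one, add_zero]
        exact ratio_sq_bound hD0 hω hY
      · have h1 : Set.indicator {ω | D < Y' ω} (fun _ => (1 : ℝ)) ω = 0 :=
          Set.indicator_of_notMem (show ω ∉ {ω | D < Y' ω} from hω) _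
        have h2 : Set.indicator S (fun _ => c ^ 2) ω = c ^ 2 :=
          Set.indicator_of_mem (show ω ∈ S from not_lt.mp hω) _
        rw [h1, h2, mul_zero, zero_sub, neg_sq]
        have hA : 0 ≤ A * (X' ω - X) ^ 2 := by positivity
        have hB : 0 ≤ B * (Y' ω - Y) ^ 2 := by positivity
        linarith
    -- integrability of RHS pieces
    have hiX : Integrable (fun ω => (X' ω - X) ^ 2) μ := by
      simpa using (hX'L2.sub (memLp_const X)).integrable_sq
    have hiY : Integrable (fun ω => (Y' ω - Y) ^ 2) μ := by
      simpa using (hY'L2.sub (memLp_const Y)).integrable_sq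
    have hind : Integrable (Set.indicator S (fun _ => c ^ 2)) μ :=
      (integrable_const (c ^ 2)).indicator hSmeas
    have hRHSint : Integrable (fun ω => A * (X' ω - X) ^ 2 + B * (Y' ω - Y) ^ 2
        + Set.indicator S (fun _ => c ^ 2) ω) μ := by
      exact ((hiX.const_mul A).add (hiY.const_mul B)).add hind
    have hle : (∫ ω, ((X' ω / Y' ω)
          * Set.indicator {ω | D < Y' ω} (fun _ => (1 : ℝ)) ω - c) ^ 2 ∂μ)
        ≤ ∫ ω, (A * (X' ω - X) ^ 2 + B * (Y' ω - Y) ^ 2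
          + Set.indicator S (fun _ => c ^ 2) ω) ∂μ :=
      integral_mono_of_nonneg (ae_of_all μ fun ω => sq_nonneg _) hRHSint
        (ae_of_all μ hpt)
    refine hle.trans ?_
    have h12 : Integrable (fun ω => A * (X' ω - X) ^ 2 + B * (Y' ω - Y) ^ 2) μ := by
      exact (hiX.const_mul A).add (hiY.const_mul B)
    have hA' : Integrable (fun ω => A * (X' ω - X) ^ 2) μ := hiX.const_mul A
    have hB' : Integrable (fun ω => B * (Y' ω - Y) ^ 2) μ := hiY.const_mul B
    rw [integral_add h12 hind, integral_add hA' hB',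
      integral_const_mul, integral_const_mul, integral_indicator_const _ hSmeas]
    have hiXeq : ∫ ω, (X' ω - X) ^ 2 ∂μ = ∫ ω, (XN N ω - X) ^ 2 ∂μ := by
      apply integral_congr_ae
      filter_upwards [hXae] with ω h; rw [h]
    have hiYeq : ∫ ω, (Y' ω - Y) ^ 2 ∂μ = ∫ ω, (YN N ω - Y) ^ 2 ∂μ := by
      apply integral_congr_ae
      filter_upwards [hYae] with ω h; rw [h]
    rw [hiXeq, hiYeq]
    -- it remains to bound the indicator integral via Chebyshev
    have hvar_eq : variance Y' μ = variance (YN N) μ := by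
      rw [variance_eq_integral hY'L2.aemeasurable, variance_eq_integral (hYL2 N).aemeasurable, hEeq]
      apply integral_congr_ae
      filter_upwards [hYae] with ω h
      simp [h]
    have hsub : S ⊆ {ω | (∫ ω, Y' ω ∂μ) - D ≤ |Y' ω - ∫ ω, Y' ω ∂μ|} := by
      intro ω hω
      simp only [hSdef, Set.mem_setOf_eq] at hω ⊢
      rw [abs_sub_comm]
      calc (∫ ω, Y' ω ∂μ) - D ≤ (∫ ω, Y' ω ∂μ) - Y' ω := by linarith
        _ ≤ |(∫ ω, Y' ω ∂μ) - Y' ω| := le_abs_self _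
    have hcheb : μ S ≤ ENNReal.ofReal (variance Y' μ / ((∫ ω, Y' ω ∂μ) - D) ^ 2) :=
      (measure_mono hsub).trans (meas_ge_le_variance_div_sq hY'L2 hED)
    have hvnn : 0 ≤ variance Y' μ / ((∫ ω, Y' ω ∂μ) - D) ^ 2 := by
      have := variance_nonneg Y' μ
      positivity
    have htr : (μ S).toReal ≤ variance Y' μ / ((∫ ω, Y' ω ∂μ) - D) ^ 2 :=
      ENNReal.toReal_le_of_le_ofReal hvnn hcheb
    have hfinal : (μ S).toReal • c ^ 2 ≤ K * variance (YN N) μ := by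
      rw [smul_eq_mul]
      have h1 : variance Y' μ / ((∫ ω, Y' ω ∂μ) - D) ^ 2
          ≤ variance Y' μ / ((Y - D) / 2) ^ 2 := by
        apply div_le_div_of_nonneg_left (variance_nonneg Y' μ)
          (by nlinarith : (0:ℝ) < ((Y - D) / 2) ^ 2)
        nlinarith
      have h2 : (μ S).toReal * c ^ 2 ≤ (variance Y' μ / ((Y - D) / 2) ^ 2) * c ^ 2 :=
        mul_le_mul_of_nonneg_right (htr.trans h1) (sq_nonneg c)
      refine h2.trans_eq ?_
      rw [hvar_eq, hKdef]
      field_simp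
      ring
    rw [measureReal_def]
    linarith
  -- conclude
  have hfg : (fun N : ℕ => ∫ ω,
        ((XN N ω / YN N ω) * Set.indicator {ω | D < YN N ω} (fun _ => (1 : ℝ)) ω
          - X / Y) ^ 2 ∂μ)
      =O[atTop] (fun N : ℕ => A * (∫ ω, (XN N ω - X) ^ 2 ∂μ)
        + B * (∫ ω, (YN N ω - Y) ^ 2 ∂μ) + K * variance (YN N) μ) := by
    rw [isBigO_iff]
    refine ⟨1, ?_⟩
    filter_upwards [hbound] with N hN
    rw [one_mul, Real.norm_eq_abs, Real.norm_eq_abs,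
      abs_of_nonneg (integral_nonneg fun ω => sq_nonneg _)]
    exact hN.trans (le_abs_self _)
  exact hfg.trans hg
end

section
/- Suppose numbers $h, h_\epsilon, h^{(1,2)}_\epsilon, h^{(2,1)}_\epsilon, h^{(1,1)}_\epsilon$ (for $\epsilon > 0$) satisfy $|h - h_\epsilon| \le C_0 \epsilon^2$, $|h^{(i,j)}_\epsilon - h^{(i,j)}_0| \le C_{ij}\epsilon^2$ for $(i,j) \in \{(1,2),(2,1),(1,1)\}$, and the variance formula $\operatorname{Var}(\widehat{h}_{\epsilon,N,N}) = \frac{1-2N}{N^2}h_\epsilon^2 + \frac{N-1}{N^2}h^{(1,2)}_\epsilon + \frac{N-1}{N^2}h^{(2,1)}_\epsilon + \frac{\epsilon^{-d}}{N^2}h^{(1,1)}_\epsilon$ holds with $\mathbb{E}[\widehat{h}_{\epsilon,N,N}] = h_\epsilon$. If $d \le 4$ and $\epsilon = \epsilon_N = c N^{-\alpha}$ for some $c > 0$ and $1/4 \le \alpha \le 1/d$, then the mean square error satisfies $\mathbb{E}[(\widehat{h}_{\epsilon_N,N,N} - h)^2] = \operatorname{Var}(\widehat{h}_{\epsilon_N,N,N})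 + (h_{\epsilon_N} - h)^2 = O(N^{-1})$ as $N \to \infty$. -/
open MeasureTheory ProbabilityTheory Filter Asymptotics

lemma mse_decomp {Ω : Type*} [MeasurableSpace Ω] (μ : Measure Ω) [IsProbabilityMeasure μ]
    (X : Ω → ℝ) (hX : MemLp X 2 μ) (h : ℝ) :
    ∫ ω, (X ω - h)^2 ∂μ = variance X μ + (∫ ω, X ω ∂μ - h)^2 := by
  have hi2 : Integrable (fun ω => X ω ^ 2) μ := hX.integrable_sq
  have hi1 : Integrable X μ := hX.integrable one_le_two
  rw [variance_eq_sub hX]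
  have e : ∀ ω, (X ω - h)^2 = X ω ^ 2 - (2*h) * X ω + h^2 := fun ω => by ring
  simp_rw [e]
  have ha : Integrable (fun ω => X ω ^ 2 - 2 * h * X ω) μ := hi2.sub (hi1.const_mul (2*h))
  rw [integral_add ha (integrable_const _),
    integral_sub hi2 (hi1.const_mul (2*h)), integral_const_mul, integral_const]
  simp only [measure_univ, ENNReal.toReal_one, smul_eq_mul, one_mul, probReal_univ, mul_one]
  have : ∫ x, (X ^ 2) x ∂μ = ∫ ω, X ω ^ 2 ∂μ := by rfl
  rw [this]; ring

theorem stmt15 {Ω : Type*} [MeasurableSpace Ω] (μ : Measure Ω)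
    [IsProbabilityMeasure μ]
    (d : ℕ) (hd1 : 1 ≤ d) (hd : d ≤ 4)
    (h : ℝ) (hfun h12 h21 h11 : ℝ → ℝ)
    (est : ℝ → ℕ → Ω → ℝ)
    (hL2 : ∀ ε N, MemLp (est ε N) 2 μ)
    (C₀ C₁₂ C₂₁ C₁₁ : ℝ)
    (hmean : ∀ ε N, ∫ ω, est ε N ω ∂μ = hfun ε)
    (hbias : ∀ ε : ℝ, 0 < ε → |h - hfun ε| ≤ C₀ * ε ^ 2)
    (hb12 : ∀ ε : ℝ, 0 < ε → |h12 ε - h12 0| ≤ C₁₂ * ε ^ 2)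
    (hb21 : ∀ ε : ℝ, 0 < ε → |h21 ε - h21 0| ≤ C₂₁ * ε ^ 2)
    (hb11 : ∀ ε : ℝ, 0 < ε → |h11 ε - h11 0| ≤ C₁₁ * ε ^ 2)
    (hvar : ∀ ε : ℝ, 0 < ε → ∀ N : ℕ, 0 < N →
      variance (est ε N) μ =
        ((1 - 2 * (N : ℝ)) / (N : ℝ) ^ 2) * hfun ε ^ 2 +
          (((N : ℝ) - 1) / (N : ℝ) ^ 2) * h12 ε +
          (((N : ℝ) - 1) / (N : ℝ) ^ 2) * h21 ε +
          ((ε ^ d)⁻¹ / (N : ℝ) ^ 2) * h11 ε)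
    (c α : ℝ) (hc : 0 < c) (hα₁ : 1 / 4 ≤ α) (hα₂ : α ≤ 1 / (d : ℝ)) :
    (fun N : ℕ => ∫ ω, (est (c * (N : ℝ) ^ (-α)) N ω - h) ^ 2 ∂μ) =O[atTop]
      fun N : ℕ => ((N : ℝ))⁻¹ := by
  have hα0 : 0 < α := lt_of_lt_of_le (by norm_num) hα₁
  set M0 : ℝ := |h| + |C₀| * c ^ 2 with hM0
  set M12 : ℝ := |h12 0| + |C₁₂| * c ^ 2 with hM12
  set M21 : ℝ := |h21 0| + |C₂₁| * c ^ 2 with hM21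
  set M11 : ℝ := |h11 0| + |C₁₁| * c ^ 2 with hM11
  set K : ℝ := 2 * M0 ^ 2 + M12 + M21 + (c ^ d)⁻¹ * M11 + C₀ ^ 2 * c ^ 4 with hK
  rw [isBigO_iff]
  refine ⟨K, ?_⟩
  filter_upwards [eventually_ge_atTop 1] with N hN1
  have hn1 : (1 : ℝ) ≤ (N : ℝ) := by exact_mod_cast hN1
  have hn0 : (0 : ℝ) < (N : ℝ) := lt_of_lt_of_le one_pos hn1
  set e : ℝ := (N : ℝ) ^ (-α) with he
  have he0 : 0 < e := Real.rpow_pos_of_pos hn0 _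
  have he1 : e ≤ 1 := Real.rpow_le_one_of_one_le_of_nonpos hn1 (by linarith)
  set ε : ℝ := c * e with hεdef
  have hε0 : 0 < ε := mul_pos hc he0
  have hεle : ε ≤ c := by
    calc ε = c * e := rfl
      _ ≤ c * 1 := mul_le_mul_of_nonneg_left he1 hc.le
      _ = c := mul_one c
  have hε2 : ε ^ 2 ≤ c ^ 2 := pow_le_pow_left₀ hε0.le hεle 2
  -- bounds on function values
  have habs : ∀ (g : ℝ → ℝ) (Cg : ℝ), |g ε - g 0| ≤ Cg * ε ^ 2 →
      |g ε| ≤ |g 0| + |Cg| * c ^ 2 := by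
    intro g Cg hg
    have h1 : |g ε| ≤ |g 0| + |g ε - g 0| := by
      have := abs_sub_abs_le_abs_sub (g ε) (g 0)
      linarith
    have h2 : Cg * ε ^ 2 ≤ |Cg| * c ^ 2 := by
      calc Cg * ε ^ 2 ≤ |Cg| * ε ^ 2 :=
            mul_le_mul_of_nonneg_right (le_abs_self Cg) (sq_nonneg ε)
        _ ≤ |Cg| * c ^ 2 := mul_le_mul_of_nonneg_left hε2 (abs_nonneg Cg)
    linarith
  have hbnd0 : |hfun ε| ≤ M0 := by
    have h1 : |hfun ε| ≤ |h| + |h - hfun ε| := by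
      have := abs_sub_abs_le_abs_sub (hfun ε) h
      rw [abs_sub_comm] at this
      linarith
    have h2 : C₀ * ε ^ 2 ≤ |C₀| * c ^ 2 := by
      calc C₀ * ε ^ 2 ≤ |C₀| * ε ^ 2 :=
            mul_le_mul_of_nonneg_right (le_abs_self C₀) (sq_nonneg ε)
        _ ≤ |C₀| * c ^ 2 := mul_le_mul_of_nonneg_left hε2 (abs_nonneg C₀)
    have := hbias ε hε0
    rw [hM0]; linarith
  have hbnd12 : |h12 ε| ≤ M12 := habs h12 C₁₂ (hb12 ε hε0)
  have hbnd21 : |h21 ε| ≤ M21 := habs h21 C₂₁ (hb21 ε hε0)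
  have hbnd11 : |h11 ε| ≤ M11 := habs h11 C₁₁ (hb11 ε hε0)
  have hM0nn : (0:ℝ) ≤ M0 := le_trans (abs_nonneg _) hbnd0
  have hM11nn : (0:ℝ) ≤ M11 := le_trans (abs_nonneg _) hbnd11
  -- epsilon power bound : (ε^d)⁻¹ ≤ (c^d)⁻¹ * N
  have hεd : (ε ^ d)⁻¹ ≤ (c ^ d)⁻¹ * (N : ℝ) := by
    have hed : e ^ d = (N : ℝ) ^ (-(α * d)) := by
      rw [he, ← Real.rpow_natCast ((N:ℝ) ^ (-α)) d, ← Real.rpow_mul hn0.le]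
      ring_nf
    have hinv : (e ^ d)⁻¹ = (N : ℝ) ^ (α * d) := by
      rw [hed, ← Real.rpow_neg hn0.le, neg_neg]
    have hαd : α * d ≤ 1 := by
      have hd0 : (0:ℝ) < (d:ℝ) := by exact_mod_cast hd1
      calc α * d ≤ (1 / (d:ℝ)) * d := mul_le_mul_of_nonneg_right hα₂ hd0.le
        _ = 1 := by field_simp
    have hNle : (N : ℝ) ^ (α * d) ≤ (N : ℝ) := by
      calc (N : ℝ) ^ (α * d) ≤ (N : ℝ) ^ (1:ℝ) :=
            Real.rpow_le_rpow_of_exponent_le hn1 hαd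
        _ = (N : ℝ) := Real.rpow_one _
    have hc0 : (0:ℝ) ≤ (c ^ d)⁻¹ := by positivity
    calc (ε ^ d)⁻¹ = (c ^ d)⁻¹ * (e ^ d)⁻¹ := by rw [hεdef, mul_pow, mul_inv]
      _ = (c ^ d)⁻¹ * (N : ℝ) ^ (α * d) := by rw [hinv]
      _ ≤ (c ^ d)⁻¹ * (N : ℝ) := mul_le_mul_of_nonneg_left hNle hc0
  -- bias bound
  have hbias2 : (hfun ε - h) ^ 2 ≤ C₀ ^ 2 * c ^ 4 * (N : ℝ)⁻¹ := by
    have hb := hbias ε hε0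
    have h1 : (hfun ε - h) ^ 2 ≤ (C₀ * ε ^ 2) ^ 2 := by
      have h2 : |h - hfun ε| ^ 2 ≤ (C₀ * ε ^ 2) ^ 2 := pow_le_pow_left₀ (abs_nonneg _) hb 2
      rw [sq_abs] at h2
      calc (hfun ε - h) ^ 2 = (h - hfun ε) ^ 2 := by ring
        _ ≤ _ := h2
    have he4 : e ^ 4 ≤ (N : ℝ)⁻¹ := by
      have h4 : e ^ 4 = (N : ℝ) ^ (-α * 4) := by
        rw [he, ← Real.rpow_natCast ((N:ℝ) ^ (-α)) 4, ← Real.rpow_mul hn0.le]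
        norm_num
      rw [h4]
      calc (N : ℝ) ^ (-α * 4) ≤ (N : ℝ) ^ (-1 : ℝ) :=
            Real.rpow_le_rpow_of_exponent_le hn1 (by linarith)
        _ = (N : ℝ)⁻¹ := by rw [Real.rpow_neg_one]
    calc (hfun ε - h) ^ 2 ≤ (C₀ * ε ^ 2) ^ 2 := h1
      _ = C₀ ^ 2 * c ^ 4 * e ^ 4 := by rw [hεdef]; ring
      _ ≤ C₀ ^ 2 * c ^ 4 * (N : ℝ)⁻¹ :=
          mul_le_mul_of_nonneg_left he4 (by positivity)
  -- main computation
  have hNpos : 0 < N := hN1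
  rw [mse_decomp μ _ (hL2 ε N), hmean, hvar ε hε0 N hNpos]
  have hn2 : (0:ℝ) < (N:ℝ)^2 := by positivity
  set A := ((1 - 2 * (N : ℝ)) / (N : ℝ) ^ 2) * hfun ε ^ 2 with hA
  set B := (((N : ℝ) - 1) / (N : ℝ) ^ 2) * h12 ε with hB
  set C := (((N : ℝ) - 1) / (N : ℝ) ^ 2) * h21 ε with hC
  set D := ((ε ^ d)⁻¹ / (N : ℝ) ^ 2) * h11 ε with hD
  have t1 : |A| ≤ 2 * M0 ^ 2 * (N : ℝ)⁻¹ := by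
    rw [hA, abs_mul, abs_div, abs_of_pos hn2, abs_pow]
    have ha1 : |1 - 2 * (N : ℝ)| ≤ 2 * (N : ℝ) := by
      rw [abs_sub_comm, abs_of_nonneg (by linarith)]; linarith
    calc |1 - 2 * (N : ℝ)| / (N:ℝ)^2 * |hfun ε| ^ 2
        ≤ (2 * (N:ℝ)) / (N:ℝ)^2 * M0 ^ 2 := by gcongr
      _ = 2 * M0 ^ 2 * (N : ℝ)⁻¹ := by field_simp
  have t2 : ∀ (g : ℝ) (Mg : ℝ), |g| ≤ Mg →
      |(((N : ℝ) - 1) / (N : ℝ) ^ 2) * g| ≤ Mg * (N : ℝ)⁻¹ := by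
    intro g Mg hg
    rw [abs_mul, abs_div, abs_of_pos hn2]
    have ha1 : |(N:ℝ) - 1| ≤ (N:ℝ) := by rw [abs_of_nonneg (by linarith)]; linarith
    have hMg : 0 ≤ Mg := le_trans (abs_nonneg _) hg
    calc |(N:ℝ) - 1| / (N:ℝ)^2 * |g| ≤ ((N:ℝ) / (N:ℝ)^2) * Mg := by gcongr
      _ = Mg * (N : ℝ)⁻¹ := by field_simp
  have t4 : |D| ≤ (c ^ d)⁻¹ * M11 * (N : ℝ)⁻¹ := by
    rw [hD, abs_mul, abs_div, abs_of_pos hn2, abs_of_pos (a := (ε ^ d)⁻¹) (by positivity)]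
    calc (ε ^ d)⁻¹ / (N:ℝ)^2 * |h11 ε| ≤ (((c ^ d)⁻¹ * (N:ℝ)) / (N:ℝ)^2) * M11 := by
          gcongr
      _ = (c ^ d)⁻¹ * M11 * (N : ℝ)⁻¹ := by field_simp
  have tri : |A + B + C + D| ≤ |A| + |B| + |C| + |D| := by
    calc |A + B + C + D| ≤ |A + B + C| + |D| := abs_add_le _ _
      _ ≤ (|A + B| + |C|) + |D| := by gcongr; exact abs_add_le _ _
      _ ≤ ((|A| + |B|) + |C|) + |D| := by gcongr; exact abs_add_le _ _
  have hfinal : |A + B + C + D + (hfun ε - h) ^ 2| ≤ K * (N : ℝ)⁻¹ := by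
    calc |A + B + C + D + (hfun ε - h) ^ 2|
        ≤ |A + B + C + D| + |(hfun ε - h) ^ 2| := abs_add_le _ _
      _ ≤ (|A| + |B| + |C| + |D|) + (hfun ε - h) ^ 2 := by
          rw [abs_of_nonneg (sq_nonneg (hfun ε - h))]; gcongr
      _ ≤ (2 * M0 ^ 2 * (N : ℝ)⁻¹ + M12 * (N : ℝ)⁻¹ + M21 * (N : ℝ)⁻¹ +
          (c ^ d)⁻¹ * M11 * (N : ℝ)⁻¹) + C₀ ^ 2 * c ^ 4 * (N : ℝ)⁻¹ := by
          exact add_le_add (add_le_add (add_le_add (add_le_add t1 (t2 _ _ hbnd12))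
            (t2 _ _ hbnd21)) t4) hbias2
      _ = K * (N : ℝ)⁻¹ := by rw [hK]; ring
  calc ‖A + B + C + D + (hfun ε - h) ^ 2‖ = |A + B + C + D + (hfun ε - h) ^ 2| := rfl
    _ ≤ K * (N : ℝ)⁻¹ := hfinal
    _ ≤ K * ‖(N : ℝ)⁻¹‖ := by rw [Real.norm_eq_abs, abs_of_nonneg (by positivity)]
end
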